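/- arXiv:1603.01180 — 3 statements merged into one kernel-verified Lean document; each statement's English description precedes it below -/
import Mathlib

section
/- In a field, given nonzero elements c₁, c₂, x₁, x₂, x₃ with c₁ + 1 ≠ 0, c₂ + 1 ≠ 0, c₁⁻¹ + 1 ≠ 0, define x₃ = (c₁ + x₂²)/((c₁+1)x₁), x₄ = (c₂x₃² + 1)/((c₂+1)x₂), x₅ = (c₃ + x₄²)/((c₃+1)x₃) with c₃ = 1/c₁. Then c₁x₃ + (1/c₁)x₅ + c₂·W = 0, where W = -c₂·[ (c₁ + x₂² - x₁x₃)/(c₂²x₁) + (c₁⁻¹ - x₃x₅)/(c₂²x₃) + (1/x₃)·((c₂x₃² + 1)/(c₂(c₂+1)x₂))² ]. -/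
theorem stmt_10 {F : Type*} [Field F] (c₁ c₂ c₃ x₁ x₂ x₃ x₄ x₅ W : F)
    (hc₁ : c₁ ≠ 0) (hc₂ : c₂ ≠ 0) (hx₁ : x₁ ≠ 0) (hx₂ : x₂ ≠ 0) (hx₃0 : x₃ ≠ 0)
    (hc₁1 : c₁ + 1 ≠ 0) (hc₂1 : c₂ + 1 ≠ 0) (hc₃1 : c₁⁻¹ + 1 ≠ 0)
    (hc₃ : c₃ = 1 / c₁)
    (hx₃ : x₃ = (c₁ + x₂ ^ 2) / ((c₁ + 1) * x₁))
    (hx₄ : x₄ = (c₂ * x₃ ^ 2 + 1) / ((c₂ + 1) * x₂))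
    (hx₅ : x₅ = (c₃ + x₄ ^ 2) / ((c₃ + 1) * x₃))
    (hW : W = -c₂ * ((c₁ + x₂ ^ 2 - x₁ * x₃) / (c₂ ^ 2 * x₁) +
        (c₁⁻¹ - x₃ * x₅) / (c₂ ^ 2 * x₃) +
        (1 / x₃) * ((c₂ * x₃ ^ 2 + 1) / (c₂ * (c₂ + 1) * x₂)) ^ 2)) :
    c₁ * x₃ + (1 / c₁) * x₅ + c₂ * W = 0 := by
  have h3 : c₁ + x₂ ^ 2 = (c₁ + 1) * x₁ * x₃ := by
    rw [hx₃]; field_simp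
  have h4 : c₂ * x₃ ^ 2 + 1 = (c₂ + 1) * x₂ * x₄ := by
    rw [hx₄]; field_simp
  have e1 : (c₁ + x₂ ^ 2 - x₁ * x₃) / (c₂ ^ 2 * x₁) = c₁ * x₃ / c₂ ^ 2 := by
    rw [h3]; field_simp; ring
  have e2 : (c₂ * x₃ ^ 2 + 1) / (c₂ * (c₂ + 1) * x₂) = x₄ / c₂ := by
    rw [h4]; field_simp
  have hA : 1 / c₁ + 1 ≠ 0 := by rwa [one_div]
  have e5 : x₅ = (1 + c₁ * x₄ ^ 2) / ((1 + c₁) * x₃) := by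
    rw [hx₅, hc₃]
    rw [div_eq_div_iff (by exact mul_ne_zero hA hx₃0) (by
      exact mul_ne_zero (by intro h; apply hc₁1; linear_combination h) hx₃0)]
    field_simp
  have h1c : (1:F) + c₁ ≠ 0 := by intro h; apply hc₁1; linear_combination h
  have hbig : c₁ * x₃ ^ 2 * c₂ ^ 4 + c₁ ^ 2 * x₃ ^ 2 * c₂ ^ 4 ≠ 0 := by
    have : c₁ * x₃ ^ 2 * c₂ ^ 4 + c₁ ^ 2 * x₃ ^ 2 * c₂ ^ 4
        = (1 + c₁) * (c₁ * x₃ ^ 2 * c₂ ^ 4) := by ring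
    rw [this]
    exact mul_ne_zero h1c (mul_ne_zero (mul_ne_zero hc₁ (pow_ne_zero 2 hx₃0)) (pow_ne_zero 4 hc₂))
  rw [hW, e1, e2, e5, inv_eq_one_div]
  field_simp [hbig]
  ring
end

section
/- The number of pairs of strictly increasing sequences 1 ≤ i₁ < ⋯ < i_p ≤ n and 1 ≤ j₁ < ⋯ < j_p ≤ n with j_q ≤ i_q for all q (including p = 0) equals the Catalan number C_{n+1} = (1/(n+2))·binom(2n+2, n+1). -/
namespace Stmt16

open Finset DyckStep

variable {n : ℕ}

/-- number of elements of `A` with value `< t` -/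
def pcnt (A : Finset (Fin n)) (t : ℕ) : ℕ := (A.filter (fun x : Fin n => (x : ℕ) < t)).card

lemma pcnt_zero (A : Finset (Fin n)) : pcnt A 0 = 0 := by simp [pcnt]

lemma pcnt_succ (A : Finset (Fin n)) (t : ℕ) (ht : t < n) :
    pcnt A (t + 1) = pcnt A t + (if (⟨t, ht⟩ : Fin n) ∈ A then 1 else 0) := by
  classical
  unfold pcnt
  have h1 : A.filter (fun x : Fin n => (x : ℕ) < t + 1)
      = A.filter (fun x : Fin n => (x : ℕ) < t) ∪ A.filter (fun x : Fin n => (x : ℕ) = t) := by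
    rw [← filter_or]; apply Finset.filter_congr; intro x _; constructor <;> (intro h; omega)
  have h2 : A.filter (fun x : Fin n => (x : ℕ) = t)
      = if (⟨t, ht⟩ : Fin n) ∈ A then ({(⟨t, ht⟩ : Fin n)} : Finset (Fin n)) else ∅ := by
    split <;> rename_i h <;> ext x <;>
      simp only [mem_filter, mem_singleton, notMem_empty, iff_false, Fin.ext_iff]
    · constructor
      · rintro ⟨hx, hv⟩; exact hv
      · rintro hv
        have : x = ⟨t, ht⟩ := Fin.ext hv
        exact ⟨this ▸ h, hv⟩
    · rintro ⟨hx, hv⟩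
      have : x = ⟨t, ht⟩ := Fin.ext hv
      exact h (this ▸ hx)
  have hdisj : Disjoint (A.filter (fun x : Fin n => (x : ℕ) < t))
      (A.filter (fun x : Fin n => (x : ℕ) = t)) := by
    rw [Finset.disjoint_left]; intro x hx hx'
    simp only [mem_filter] at hx hx'; omega
  rw [h1, card_union_of_disjoint hdisj, h2]
  split <;> simp

lemma pcnt_of_le (A : Finset (Fin n)) {t : ℕ} (ht : n ≤ t) : pcnt A t = A.card := by
  unfold pcnt
  rw [filter_true_of_mem]
  intro x _; exact lt_of_lt_of_le x.2 ht

lemma pcnt_le_card (A : Finset (Fin n)) (t : ℕ) : pcnt A t ≤ A.card :=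
  card_filter_le _ _

/-- step at odd position `2k+1`, determined by `B` -/
def bstep (B : Finset (Fin n)) (k : ℕ) : DyckStep :=
  if h : k < n then (if (⟨k, h⟩ : Fin n) ∈ B then U else D) else U

/-- step at even position `2k+2`, determined by `A` -/
def astep (A : Finset (Fin n)) (k : ℕ) : DyckStep :=
  if h : k < n then (if (⟨k, h⟩ : Fin n) ∈ A then D else U) else U

/-- the body of the word: blocks `[bstep k, astep k]` for `k < t` -/
def body (A B : Finset (Fin n)) : ℕ → List DyckStep
  | 0 => []
  | t + 1 => body A B t ++ [bstep B t, astep A t]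

lemma body_length (A B : Finset (Fin n)) (t : ℕ) : (body A B t).length = 2 * t := by
  induction t with
  | zero => rfl
  | succ t ih => simp [body, ih]; omega

lemma body_count (A B : Finset (Fin n)) (t : ℕ) (ht : t ≤ n) :
    (body A B t).count U + pcnt A t = t + pcnt B t ∧
    (body A B t).count D + pcnt B t = t + pcnt A t := by
  induction t with
  | zero => simp [body, pcnt_zero]
  | succ t ih =>
    have ht' : t < n := ht
    obtain ⟨h1, h2⟩ := ih (le_of_lt ht')
    have ha := pcnt_succ A t ht'
    have hb := pcnt_succ B t ht'
    unfold body
    rw [List.count_append, List.count_append]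
    unfold bstep astep
    rw [dif_pos ht', dif_pos ht']
    by_cases hA : (⟨t, ht'⟩ : Fin n) ∈ A <;> by_cases hB : (⟨t, ht'⟩ : Fin n) ∈ B <;>
      simp [hA, hB] at ha hb ⊢ <;> omega


lemma body_prefix (A B : Finset (Fin n)) {t u : ℕ} (h : t ≤ u) :
    ∃ r, body A B u = body A B t ++ r := by
  induction u with
  | zero =>
    have : t = 0 := by omega
    exact ⟨[], by simp [this]⟩
  | succ u ih =>
    rcases Nat.lt_or_ge t (u + 1) with h' | h'
    · obtain ⟨r, hr⟩ := ih (by omega)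
      exact ⟨r ++ [bstep B u, astep A u], by simp [body, hr]⟩
    · have : t = u + 1 := by omega
      exact ⟨[], by simp [this]⟩

lemma body_take (A B : Finset (Fin n)) {t u : ℕ} (h : t ≤ u) :
    (body A B u).take (2 * t) = body A B t := by
  obtain ⟨r, hr⟩ := body_prefix A B h
  rw [hr, List.take_append, List.take_of_length_le (by rw [body_length]),
    body_length, Nat.sub_self, List.take_zero, List.append_nil]

lemma body_take_odd (A B : Finset (Fin n)) {t u : ℕ} (h : t < u) :
    (body A B u).take (2 * t + 1) = body A B t ++ [bstep B t] := by
  obtain ⟨r, hr⟩ := body_prefix A B (show t + 1 ≤ u by omega)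
  rw [hr]
  show (body A B t ++ [bstep B t, astep A t] ++ r).take (2 * t + 1) = _
  rw [List.append_assoc, List.take_append,
    List.take_of_length_le (by rw [body_length]; omega), body_length]
  rw [show 2 * t + 1 - 2 * t = 1 by omega]
  rfl

/-- the full word `U (body n) D` -/
def wordList (A B : Finset (Fin n)) : List DyckStep := U :: (body A B n ++ [D])

lemma wordList_length (A B : Finset (Fin n)) : (wordList A B).length = 2 * n + 2 := by
  simp [wordList, body_length]

lemma wordList_count (A B : Finset (Fin n)) :
    (wordList A B).count U = 1 + (body A B n).count U ∧
    (wordList A B).count D = (body A B n).count D + 1 := by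
  unfold wordList
  rw [List.count_cons, List.count_cons, List.count_append, List.count_append]
  simp [List.count_singleton]
  omega

lemma wordList_count_U (A B : Finset (Fin n)) (hcard : A.card = B.card) :
    (wordList A B).count U = n + 1 := by
  obtain ⟨h1, h2⟩ := body_count A B n le_rfl
  obtain ⟨h3, h4⟩ := wordList_count A B
  rw [pcnt_of_le A le_rfl, pcnt_of_le B le_rfl] at h1 h2
  omega

lemma wordList_count_eq (A B : Finset (Fin n)) (hcard : A.card = B.card) :
    (wordList A B).count U = (wordList A B).count D := by
  obtain ⟨h1, h2⟩ := body_count A B n le_rfl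
  obtain ⟨h3, h4⟩ := wordList_count A B
  rw [pcnt_of_le A le_rfl, pcnt_of_le B le_rfl] at h1 h2
  omega

lemma wordList_prefix (A B : Finset (Fin n)) (hcard : A.card = B.card)
    (hdom : ∀ t, pcnt A t ≤ pcnt B t) (i : ℕ) :
    ((wordList A B).take i).count D ≤ ((wordList A B).take i).count U := by
  obtain ⟨h1, h2⟩ := body_count A B n le_rfl
  rcases i with - | j
  · simp
  unfold wordList
  rw [List.take_succ_cons,
    List.count_cons_of_ne (by simp), List.count_cons_self]
  set X := body A B n ++ [D] with hX
  suffices h : (X.take j).count D ≤ 1 + (X.take j).count U by omega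
  rcases Nat.lt_or_ge j (2 * n + 1) with hj | hj
  · -- j ≤ 2n: within the body
    have hjb : X.take j = (body A B n).take j := by
      rw [hX, List.take_append,
        show j - (body A B n).length = 0 by rw [body_length]; omega, List.take_zero,
        List.append_nil]
    rw [hjb]
    rcases Nat.even_or_odd j with ⟨t, hpar⟩ | ⟨t, hpar⟩
    · have ht : t ≤ n := by omega
      rw [show j = 2 * t by omega, body_take A B ht]
      obtain ⟨g1, g2⟩ := body_count A B t ht
      have := hdom t
      omega
    · have ht : t < n := by omega
      rw [show j = 2 * t + 1 by omega, body_take_odd A B ht]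
      obtain ⟨g1, g2⟩ := body_count A B t (le_of_lt ht)
      have := hdom t
      rw [List.count_append, List.count_append]
      rcases (bstep B t).dichotomy with hb | hb <;> rw [hb] <;>
        simp [List.count_singleton] <;> omega
  · -- full list
    have : X.take j = X := List.take_of_length_le (by simp [hX, body_length]; omega)
    rw [this, hX, List.count_append, List.count_append]
    rw [pcnt_of_le A le_rfl, pcnt_of_le B le_rfl] at h1 h2
    simp [List.count_singleton]
    omega

/-- the Dyck word associated to a dominated pair of finsets -/
def wordOf (A B : Finset (Fin n)) (hcard : A.card = B.card)
    (hdom : ∀ t, pcnt A t ≤ pcnt B t) : DyckWord :=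
  ⟨wordList A B, wordList_count_eq A B hcard, wordList_prefix A B hcard hdom⟩

lemma wordOf_semilength (A B : Finset (Fin n)) (hcard : A.card = B.card)
    (hdom : ∀ t, pcnt A t ≤ pcnt B t) : (wordOf A B hcard hdom).semilength = n + 1 :=
  wordList_count_U A B hcard


lemma body_getD (A B : Finset (Fin n)) {t u : ℕ} (h : t < u) (d : DyckStep) :
    (body A B u).getD (2 * t) d = bstep B t ∧ (body A B u).getD (2 * t + 1) d = astep A t := by
  obtain ⟨r, hr⟩ := body_prefix A B (show t + 1 ≤ u by omega)
  have h1 : body A B (t + 1) = body A B t ++ [bstep B t, astep A t] := rfl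
  rw [hr, h1, List.append_assoc]
  constructor
  · rw [List.getD_append_right _ _ _ _ (by rw [body_length]), body_length, Nat.sub_self]
    rfl
  · rw [List.getD_append_right _ _ _ _ (by rw [body_length]; omega), body_length,
      show 2 * t + 1 - 2 * t = 1 by omega]
    rfl

lemma wordList_getD_zero (A B : Finset (Fin n)) (d : DyckStep) :
    (wordList A B).getD 0 d = U := rfl

lemma wordList_getD_odd (A B : Finset (Fin n)) {k : ℕ} (hk : k < n) (d : DyckStep) :
    (wordList A B).getD (2 * k + 1) d = bstep B k := by
  show (body A B n ++ [D]).getD (2 * k) d = bstep B k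
  rw [List.getD_append _ _ _ _ (by rw [body_length]; omega)]
  exact (body_getD A B hk d).1

lemma wordList_getD_even (A B : Finset (Fin n)) {k : ℕ} (hk : k < n) (d : DyckStep) :
    (wordList A B).getD (2 * k + 2) d = astep A k := by
  show (body A B n ++ [D]).getD (2 * k + 1) d = astep A k
  rw [List.getD_append _ _ _ _ (by rw [body_length]; omega)]
  exact (body_getD A B hk d).2

lemma wordList_getD_last (A B : Finset (Fin n)) (d : DyckStep) :
    (wordList A B).getD (2 * n + 1) d = D := by
  show (body A B n ++ [D]).getD (2 * n) d = D
  rw [List.getD_append_right _ _ _ _ (by rw [body_length]), body_length, Nat.sub_self]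
  rfl

/-- extract the `A`-part from a word -/
def extA (n : ℕ) (w : List DyckStep) : Finset (Fin n) :=
  univ.filter (fun k : Fin n => w.getD (2 * (k : ℕ) + 2) U = D)

/-- extract the `B`-part from a word -/
def extB (n : ℕ) (w : List DyckStep) : Finset (Fin n) :=
  univ.filter (fun k : Fin n => w.getD (2 * (k : ℕ) + 1) D = U)

lemma extA_wordList (A B : Finset (Fin n)) : extA n (wordList A B) = A := by
  ext k
  have hk : (k : ℕ) < n := k.2
  simp only [extA, mem_filter, mem_univ, true_and, wordList_getD_even A B hk]
  unfold astep
  rw [dif_pos hk]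
  by_cases h : (⟨(k : ℕ), hk⟩ : Fin n) ∈ A
  · simp only [if_pos h]
    simpa using h
  · simp only [if_neg h]
    constructor
    · intro h'; exact absurd h' (by simp)
    · intro h'; exact absurd (show (⟨(k : ℕ), hk⟩ : Fin n) ∈ A by simpa using h') h

lemma extB_wordList (A B : Finset (Fin n)) : extB n (wordList A B) = B := by
  ext k
  have hk : (k : ℕ) < n := k.2
  simp only [extB, mem_filter, mem_univ, true_and, wordList_getD_odd A B hk]
  unfold bstep
  rw [dif_pos hk]
  by_cases h : (⟨(k : ℕ), hk⟩ : Fin n) ∈ B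
  · simp only [if_pos h]
    simpa using h
  · simp only [if_neg h]
    constructor
    · intro h'; exact absurd h' (by simp)
    · intro h'; exact absurd (show (⟨(k : ℕ), hk⟩ : Fin n) ∈ B by simpa using h') h

lemma reconstruct (w : List DyckStep) (hlen : w.length = 2 * n + 2)
    (hhead : w.getD 0 D = U) (hlast : w.getD (2 * n + 1) U = D) :
    w = wordList (extA n w) (extB n w) := by
  apply List.ext_getElem (by rw [hlen, wordList_length])
  intro i h1 h2
  have hi : i < 2 * n + 2 := by omega
  rw [← List.getD_eq_getElem w D h1, ← List.getD_eq_getElem _ D h2]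
  rcases Nat.eq_or_lt_of_le (Nat.zero_le i) with h0 | h0
  · subst h0
    rw [hhead, wordList_getD_zero]
  rcases Nat.eq_or_lt_of_le (show i + 1 ≤ 2 * n + 2 from hi) with hL | hL
  · have : i = 2 * n + 1 := by omega
    subst this
    rw [List.getD_eq_getElem w U h1] at hlast
    rw [List.getD_eq_getElem w D h1, hlast, wordList_getD_last]
  · -- 1 ≤ i ≤ 2n
    rcases Nat.even_or_odd i with ⟨k', hpar⟩ | ⟨k, hpar⟩
    · -- even, i = 2(k'-1) + 2 with k'-1 < n
      have hk' : 1 ≤ k' := by omega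
      set k := k' - 1 with hk
      have hkn : k < n := by omega
      have hieq : i = 2 * k + 2 := by omega
      subst hieq
      rw [wordList_getD_even _ _ hkn]
      unfold astep
      rw [dif_pos hkn]
      have hmem : ((⟨k, hkn⟩ : Fin n) ∈ extA n w) ↔ w.getD (2 * k + 2) U = D := by
        simp [extA]
      rw [List.getD_eq_getElem w D h1]
      rcases (w[2 * k + 2]'h1).dichotomy with hw | hw
      · rw [if_neg, hw]
        rw [hmem, List.getD_eq_getElem w U h1, hw]
        simp
      · rw [if_pos, hw]
        rw [hmem, List.getD_eq_getElem w U h1, hw]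
    · -- odd, i = 2k + 1 with k < n
      have hkn : k < n := by omega
      have hieq : i = 2 * k + 1 := by omega
      subst hieq
      rw [wordList_getD_odd _ _ hkn]
      unfold bstep
      rw [dif_pos hkn]
      have hmem : ((⟨k, hkn⟩ : Fin n) ∈ extB n w) ↔ w.getD (2 * k + 1) D = U := by
        simp [extB]
      rw [List.getD_eq_getElem w D h1] at hmem ⊢
      rcases (w[2 * k + 1]'h1).dichotomy with hw | hw
      · rw [if_pos, hw]
        rw [hmem, hw]
      · rw [if_neg, hw]
        rw [hmem, hw]
        simp


lemma dyck_toList (w : DyckWord) (hsl : w.semilength = n + 1) :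
    w.toList = wordList (extA n w.toList) (extB n w.toList) := by
  have hlen : w.toList.length = 2 * n + 2 := by
    have := w.two_mul_semilength_eq_length
    rw [hsl] at this; omega
  have hne : w.toList ≠ [] := by
    intro h; rw [h] at hlen; simp at hlen
  have hhead : w.toList.getD 0 D = U := by
    rw [List.getD_eq_getElem _ _ (by omega), List.getElem_zero]
    exact w.head_eq_U _
  have hlast : w.toList.getD (2 * n + 1) U = D := by
    have h2 := w.getLast_eq_D hne
    rw [List.getLast_eq_getElem, ← List.getD_eq_getElem w.toList U] at h2
    rw [hlen, show 2 * n + 2 - 1 = 2 * n + 1 by omega] at h2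
    exact h2
  exact reconstruct w.toList hlen hhead hlast

lemma ext_card_dom (w : DyckWord) (hsl : w.semilength = n + 1) :
    (extA n w.toList).card = (extB n w.toList).card ∧
    ∀ t, pcnt (extA n w.toList) t ≤ pcnt (extB n w.toList) t := by
  set A := extA n w.toList with hA
  set B := extB n w.toList with hB
  have hw : w.toList = wordList A B := dyck_toList w hsl
  obtain ⟨h1, h2⟩ := body_count A B n le_rfl
  rw [pcnt_of_le A le_rfl, pcnt_of_le B le_rfl] at h1 h2
  obtain ⟨h3, h4⟩ := wordList_count A B
  have hcount := w.count_U_eq_count_D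
  rw [hw] at hcount
  have hcard : A.card = B.card := by omega
  refine ⟨hcard, fun t => ?_⟩
  rcases Nat.lt_or_ge t n with ht | ht
  · have hpre := w.count_D_le_count_U (2 * t + 1)
    rw [hw] at hpre
    have htake : (wordList A B).take (2 * t + 1) = U :: body A B t := by
      unfold wordList
      rw [List.take_succ_cons]
      congr 1
      rw [List.take_append,
        show 2 * t - (body A B n).length = 0 by rw [body_length]; omega,
        List.take_zero, List.append_nil]
      exact body_take A B (le_of_lt ht)
    rw [htake, List.count_cons_of_ne (by simp), List.count_cons_self] at hpre
    obtain ⟨g1, g2⟩ := body_count A B t (le_of_lt ht)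
    omega
  · rw [pcnt_of_le A ht, pcnt_of_le B ht, hcard]

/-- second equivalence: dominated pairs of finsets vs Dyck words of semilength `n+1` -/
def equiv2 (n : ℕ) :
    {AB : Finset (Fin n) × Finset (Fin n) //
      AB.1.card = AB.2.card ∧ ∀ t, pcnt AB.1 t ≤ pcnt AB.2 t} ≃
    {w : DyckWord // w.semilength = n + 1} where
  toFun x := ⟨wordOf x.1.1 x.1.2 x.2.1 x.2.2, wordOf_semilength _ _ _ _⟩
  invFun y := ⟨(extA n y.1.toList, extB n y.1.toList),
    (ext_card_dom y.1 y.2).1, (ext_card_dom y.1 y.2).2⟩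
  left_inv := by
    rintro ⟨⟨A, B⟩, h1, h2⟩
    apply Subtype.ext
    show (extA n (wordList A B), extB n (wordList A B)) = (A, B)
    rw [extA_wordList, extB_wordList]
  right_inv := by
    rintro ⟨w, hw⟩
    apply Subtype.ext
    apply DyckWord.ext
    exact (dyck_toList w hw).symm

/-- key: position of `q`-th element of `s` vs prefix counts -/
lemma emb_lt_iff (s : Finset (Fin n)) {p : ℕ} (h : s.card = p) (q : Fin p) (t : ℕ) :
    ((s.orderEmbOfFin h q : Fin n) : ℕ) < t ↔ (q : ℕ) < pcnt s t := by
  classical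
  set e := s.orderEmbOfFin h with he
  set F := univ.filter (fun i : Fin p => ((e i : Fin n) : ℕ) < t) with hF
  have hcard : pcnt s t = F.card := by
    have himg : s.filter (fun x : Fin n => (x : ℕ) < t) = F.image e := by
      ext x
      simp only [hF, mem_filter, mem_image, mem_univ, true_and]
      constructor
      · rintro ⟨hxs, hxt⟩
        have hx : x ∈ Set.range e := by rw [he, Finset.range_orderEmbOfFin]; exact hxs
        obtain ⟨i, hi⟩ := hx
        exact ⟨i, by rw [hi]; exact hxt, hi⟩
      · rintro ⟨i, hit, rfl⟩
        exact ⟨s.orderEmbOfFin_mem h i, hit⟩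
    rw [pcnt, himg, Finset.card_image_of_injective _ e.injective]
  rw [hcard]
  constructor
  · intro hlt
    have hsub : Finset.Iic q ⊆ F := by
      intro i hi
      simp only [mem_Iic] at hi
      simp only [hF, mem_filter, mem_univ, true_and]
      exact lt_of_le_of_lt (Fin.le_def.mp (e.monotone hi)) hlt
    have := Finset.card_le_card hsub
    rw [Fin.card_Iic] at this
    omega
  · intro hlt
    by_contra hq
    have hsub : F ⊆ Finset.Iio q := by
      intro i hi
      simp only [hF, mem_filter, mem_univ, true_and] at hi
      simp only [mem_Iio]
      by_contra hqi
      have : q ≤ i := not_lt.mp hqi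
      exact hq (lt_of_le_of_lt (Fin.le_def.mp (e.monotone this)) hi)
    have := Finset.card_le_card hsub
    rw [Fin.card_Iio] at this
    omega

lemma dom_of_pcnt (A B : Finset (Fin n)) {p : ℕ} (hA : A.card = p) (hB : B.card = p)
    (hdom : ∀ t, pcnt A t ≤ pcnt B t) (q : Fin p) :
    B.orderEmbOfFin hB q ≤ A.orderEmbOfFin hA q := by
  set t := ((A.orderEmbOfFin hA q : Fin n) : ℕ) + 1 with ht
  have h1 : (q : ℕ) < pcnt A t := (emb_lt_iff A hA q t).mp (by omega)
  have h2 : (q : ℕ) < pcnt B t := lt_of_lt_of_le h1 (hdom t)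
  have h3 := (emb_lt_iff B hB q t).mpr h2
  exact Fin.le_def.mpr (by omega)

lemma pcnt_image {p : ℕ} (f : Fin p → Fin n) (hf : Function.Injective f) (t : ℕ) :
    pcnt (univ.image f) t = (univ.filter (fun q : Fin p => ((f q : Fin n) : ℕ) < t)).card := by
  rw [pcnt, Finset.filter_image, Finset.card_image_of_injective _ hf]

lemma pcnt_image_le {p : ℕ} (f g : Fin p → Fin n) (hf : Function.Injective f)
    (hg : Function.Injective g) (hle : ∀ q, g q ≤ f q) (t : ℕ) :
    pcnt (univ.image f) t ≤ pcnt (univ.image g) t := by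
  rw [pcnt_image f hf, pcnt_image g hg]
  apply Finset.card_le_card
  intro q hq
  simp only [mem_filter, mem_univ, true_and] at hq ⊢
  exact lt_of_le_of_lt (Fin.le_def.mp (hle q)) hq

lemma image_orderEmbOfFin (s : Finset (Fin n)) {p : ℕ} (h : s.card = p) :
    univ.image (fun q => s.orderEmbOfFin h q) = s := by
  ext x
  simp only [mem_image, mem_univ, true_and]
  constructor
  · rintro ⟨q, rfl⟩
    exact s.orderEmbOfFin_mem h q
  · intro hx
    have : x ∈ Set.range (s.orderEmbOfFin h) := by rw [Finset.range_orderEmbOfFin]; exact hx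
    obtain ⟨q, hq⟩ := this
    exact ⟨q, hq⟩

/-- the forward map of the first equivalence -/
def toMid (n : ℕ)
    (x : (p : Fin (n + 1)) × {fg : (Fin (p : ℕ) → Fin n) × (Fin (p : ℕ) → Fin n) //
        StrictMono fg.1 ∧ StrictMono fg.2 ∧ ∀ q, fg.2 q ≤ fg.1 q}) :
    {AB : Finset (Fin n) × Finset (Fin n) //
      AB.1.card = AB.2.card ∧ ∀ t, pcnt AB.1 t ≤ pcnt AB.2 t} :=
  ⟨(univ.image x.2.1.1, univ.image x.2.1.2), by
      simp only
      rw [card_image_of_injective _ x.2.2.1.injective,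
        card_image_of_injective _ x.2.2.2.1.injective],
    fun t => pcnt_image_le _ _ x.2.2.1.injective x.2.2.2.1.injective x.2.2.2.2 t⟩

/-- the backward map of the first equivalence -/
def midOf (n : ℕ)
    (y : {AB : Finset (Fin n) × Finset (Fin n) //
      AB.1.card = AB.2.card ∧ ∀ t, pcnt AB.1 t ≤ pcnt AB.2 t}) :
    (p : Fin (n + 1)) × {fg : (Fin (p : ℕ) → Fin n) × (Fin (p : ℕ) → Fin n) //
        StrictMono fg.1 ∧ StrictMono fg.2 ∧ ∀ q, fg.2 q ≤ fg.1 q} :=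
  ⟨⟨y.1.1.card, by
      have h := Finset.card_le_univ y.1.1
      rw [Fintype.card_fin] at h
      omega⟩,
    ⟨(fun q => y.1.1.orderEmbOfFin rfl q, fun q => y.1.2.orderEmbOfFin y.2.1.symm q),
      (y.1.1.orderEmbOfFin rfl).strictMono,
      (y.1.2.orderEmbOfFin y.2.1.symm).strictMono,
      fun q => dom_of_pcnt y.1.1 y.1.2 rfl y.2.1.symm y.2.2 q⟩⟩

lemma toMid_midOf (n : ℕ) (y) : toMid n (midOf n y) = y := by
  obtain ⟨⟨A, B⟩, hcard, hdom⟩ := y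
  apply Subtype.ext
  simp only [toMid, midOf]
  exact Prod.ext (image_orderEmbOfFin _ _) (image_orderEmbOfFin _ _)

lemma toMid_inj (n : ℕ) : Function.Injective (toMid n) := by
  rintro ⟨⟨v1, h1⟩, ⟨⟨f1, g1⟩, hf1, hg1, hle1⟩⟩ ⟨⟨v2, h2⟩, ⟨⟨f2, g2⟩, hf2, hg2, hle2⟩⟩ heq
  have h := Subtype.ext_iff.mp heq
  simp only [toMid] at h
  have hA : univ.image f1 = univ.image f2 := congrArg Prod.fst h
  have hB : univ.image g1 = univ.image g2 := congrArg Prod.snd h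
  have hcf1 : (univ.image f1).card = v1 := by
    rw [card_image_of_injective _ hf1.injective, Finset.card_univ, Fintype.card_fin]
  have hcf2 : (univ.image f2).card = v2 := by
    rw [card_image_of_injective _ hf2.injective, Finset.card_univ, Fintype.card_fin]
  have hv : v1 = v2 := by rw [← hcf1, ← hcf2, hA]
  subst hv
  apply congrArg
  apply Subtype.ext
  show (f1, g1) = (f2, g2)
  have e1 : f1 = (univ.image f1).orderEmbOfFin hcf1 :=
    Finset.orderEmbOfFin_unique _ (fun x => mem_image_of_mem f1 (mem_univ x)) hf1
  have e2 : f2 = (univ.image f1).orderEmbOfFin hcf1 :=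
    Finset.orderEmbOfFin_unique _ (fun x => hA ▸ mem_image_of_mem f2 (mem_univ x)) hf2
  have hcg1 : (univ.image g1).card = v1 := by
    rw [card_image_of_injective _ hg1.injective, Finset.card_univ, Fintype.card_fin]
  have e3 : g1 = (univ.image g1).orderEmbOfFin hcg1 :=
    Finset.orderEmbOfFin_unique _ (fun x => mem_image_of_mem g1 (mem_univ x)) hg1
  have e4 : g2 = (univ.image g1).orderEmbOfFin hcg1 :=
    Finset.orderEmbOfFin_unique _ (fun x => hB ▸ mem_image_of_mem g2 (mem_univ x)) hg2
  rw [e1, e2, e3, e4]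

/-- first equivalence: sigma type of pairs of strictly monotone maps vs dominated finset pairs -/
noncomputable def equiv1 (n : ℕ) :
    ((p : Fin (n + 1)) × {fg : (Fin (p : ℕ) → Fin n) × (Fin (p : ℕ) → Fin n) //
        StrictMono fg.1 ∧ StrictMono fg.2 ∧ ∀ q, fg.2 q ≤ fg.1 q}) ≃
    {AB : Finset (Fin n) × Finset (Fin n) //
      AB.1.card = AB.2.card ∧ ∀ t, pcnt AB.1 t ≤ pcnt AB.2 t} :=
  Equiv.ofBijective (toMid n) ⟨toMid_inj n, fun y => ⟨midOf n y, toMid_midOf n y⟩⟩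

end Stmt16

theorem stmt_16 (n : ℕ) :
    Fintype.card ((p : Fin (n + 1)) ×
      {fg : (Fin (p : ℕ) → Fin n) × (Fin (p : ℕ) → Fin n) //
        StrictMono fg.1 ∧ StrictMono fg.2 ∧ ∀ q, fg.2 q ≤ fg.1 q}) =
    Nat.choose (2 * n + 2) (n + 1) / (n + 2) ∧
    Nat.choose (2 * n + 2) (n + 1) / (n + 2) = catalan (n + 1) := by
  have hc : Nat.choose (2 * n + 2) (n + 1) / (n + 2) = catalan (n + 1) := by
    rw [catalan_eq_centralBinom_div, Nat.centralBinom, show 2 * (n + 1) = 2 * n + 2 by ring]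
  refine ⟨?_, hc⟩
  rw [hc]
  rw [Fintype.card_congr ((Stmt16.equiv1 n).trans (Stmt16.equiv2 n))]
  exact DyckWord.card_dyckWord_semilength_eq_catalan (n + 1)
end

section
/- Let A be a unital ℂ-algebra with elements e₁, e₂ satisfying e₁² = e₁, e₂² = e₂, e₁e₂e₁ = -2e₁, e₂e₁e₂ = -2e₂. Define u₁ = e₁ + 1, u₂ = e₂ + 1. Then for all integers k, m, the product u₁^k·u₂^m lies in the ℂ-linear span of {1, e₁, e₂, e₁e₂, e₂e₁}. -/
theorem stmt_19 {A : Type*} [Ring A] [Algebra ℂ A] (e₁ e₂ : A)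
    (h₁ : e₁ * e₁ = e₁) (h₂ : e₂ * e₂ = e₂)
    (h₁₂₁ : e₁ * e₂ * e₁ = -(2 * e₁)) (h₂₁₂ : e₂ * e₁ * e₂ = -(2 * e₂))
    (u₁ u₂ : Aˣ) (hu₁ : (u₁ : A) = e₁ + 1) (hu₂ : (u₂ : A) = e₂ + 1)
    (hu₁' : ((u₁⁻¹ : Aˣ) : A) = (-(1/2 : ℂ)) • e₁ + 1)
    (hu₂' : ((u₂⁻¹ : Aˣ) : A) = (-(1/2 : ℂ)) • e₂ + 1) :
    ∀ k m : ℤ, ((u₁ ^ k * u₂ ^ m : Aˣ) : A) ∈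
      Submodule.span ℂ ({1, e₁, e₂, e₁ * e₂, e₂ * e₁} : Set A) := by
  set S := Submodule.span ℂ ({1, e₁, e₂, e₁ * e₂, e₂ * e₁} : Set A) with hS
  have m0 : (1 : A) ∈ S := Submodule.subset_span (by simp)
  have m1 : e₁ ∈ S := Submodule.subset_span (by simp)
  have m2 : e₂ ∈ S := Submodule.subset_span (by simp)
  have m3 : e₁ * e₂ ∈ S := Submodule.subset_span (by simp)
  have m4 : e₂ * e₁ ∈ S := Submodule.subset_span (by simp)
  have ha : e₁ * e₂ * e₂ = e₁ * e₂ := by rw [mul_assoc, h₂]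
  have hb : e₂ * e₁ * e₁ = e₂ * e₁ := by rw [mul_assoc, h₁]
  have key : S * S ≤ S := by
    rw [hS, Submodule.span_mul_span]
    apply Submodule.span_le.2
    rintro z ⟨a, ha, b, hb, rfl⟩
    simp only [Set.mem_insert_iff, Set.mem_singleton_iff] at ha hb
    rcases ha with rfl | rfl | rfl | rfl | rfl <;>
      rcases hb with rfl | rfl | rfl | rfl | rfl <;>
      simp only [one_mul, mul_one, ← mul_assoc, h₁, h₂, ha, hb, h₁₂₁, h₂₁₂, neg_mul] <;>
      first
      | exact m0 | exact m1 | exact m2 | exact m3 | exact m4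
      | (apply S.neg_mem; rw [mul_assoc, two_mul]; exact S.add_mem m3 m3)
      | (apply S.neg_mem; rw [mul_assoc, two_mul]; exact S.add_mem m4 m4)
      | (apply S.neg_mem; rw [two_mul]; exact S.add_mem m1 m1)
      | (apply S.neg_mem; rw [two_mul]; exact S.add_mem m2 m2)
  have hmul : ∀ x ∈ S, ∀ y ∈ S, x * y ∈ S := fun x hx y hy =>
    key (Submodule.mul_mem_mul hx hy)
  have hU1 : ((u₁ : A)) ∈ S := by rw [hu₁]; exact S.add_mem m1 m0
  have hU2 : ((u₂ : A)) ∈ S := by rw [hu₂]; exact S.add_mem m2 m0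
  have hU1' : ((u₁⁻¹ : Aˣ) : A) ∈ S := by
    rw [hu₁']; exact S.add_mem (S.smul_mem _ m1) m0
  have hU2' : ((u₂⁻¹ : Aˣ) : A) ∈ S := by
    rw [hu₂']; exact S.add_mem (S.smul_mem _ m2) m0
  have p1 : ∀ k : ℤ, ((u₁ ^ k : Aˣ) : A) ∈ S := by
    intro k
    induction k using Int.induction_on with
    | zero => simpa using m0
    | succ n ih =>
        rw [zpow_add_one, Units.val_mul]
        exact hmul _ ih _ hU1
    | pred n ih =>
        rw [zpow_sub_one, Units.val_mul]
        exact hmul _ ih _ hU1'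
  have p2 : ∀ k : ℤ, ((u₂ ^ k : Aˣ) : A) ∈ S := by
    intro k
    induction k using Int.induction_on with
    | zero => simpa using m0
    | succ n ih =>
        rw [zpow_add_one, Units.val_mul]
        exact hmul _ ih _ hU2
    | pred n ih =>
        rw [zpow_sub_one, Units.val_mul]
        exact hmul _ ih _ hU2'
  intro k m
  rw [Units.val_mul]
  exact hmul _ (p1 k) _ (p2 m)
end
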